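/- Let κ₁, κ₂ ∈ ℝ and let D : ℝ³ \ {0} → ℂ be the difference kernel D(x) = (exp(−ι κ₁ ‖x‖) − exp(−ι κ₂ ‖x‖)) / (4π ‖x‖). Then there exists a constant C > 0 such that for all x with 0 < ‖x‖ ≤ 1, the norm of the second iterated Fréchet derivative of D at x is bounded by C / ‖x‖. In particular, the second derivatives of the difference kernel are only weakly singular at the origin, which is the mechanism by which the weighted combination of two hyper-singular (grad–div) single-layer contributions in the Müller formulation becomes a weakly singular, second-kind operator. -/

import Mathlib

set_option synthInstance.maxHeartbeats 1000000
set_option maxHeartbeats 1600000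
open Filter Set Function

noncomputable def hkAux (κ₁ κ₂ : ℝ) : ℝ → ℂ := fun t =>
  (Complex.exp (-(Complex.I) * κ₁ * t) - Complex.exp (-(Complex.I) * κ₂ * t)) / (4 * (Real.pi : ℂ))

lemma hkAux_analytic (κ₁ κ₂ : ℝ) (r : ℝ) : AnalyticAt ℝ (hkAux κ₁ κ₂) r := by
  have hre : AnalyticAt ℝ (fun t : ℝ => (t : ℂ)) r := Complex.ofRealCLM.analyticAt r
  have h1 : ∀ κ : ℝ, AnalyticAt ℝ (fun t : ℝ => Complex.exp (-(Complex.I) * κ * t)) r := by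
    intro κ
    have hin : AnalyticAt ℝ (fun t : ℝ => -(Complex.I) * κ * t) r :=
      analyticAt_const.mul hre
    exact (analyticAt_cexp.restrictScalars.comp hin)
  exact ((h1 κ₁).sub (h1 κ₂)).div analyticAt_const (by
    simp [Complex.ofReal_ne_zero, Real.pi_ne_zero])

lemma hkAux_zero (κ₁ κ₂ : ℝ) : hkAux κ₁ κ₂ 0 = 0 := by
  simp [hkAux]

noncomputable def hkPhi (κ₁ κ₂ : ℝ) : ℝ → ℂ := dslope (hkAux κ₁ κ₂) 0

lemma hkPhi_analytic (κ₁ κ₂ : ℝ) (r : ℝ) : AnalyticAt ℝ (hkPhi κ₁ κ₂) r := by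
  rcases eq_or_ne r 0 with rfl | hr
  · obtain ⟨p, hp⟩ := hkAux_analytic κ₁ κ₂ 0
    exact ⟨p.fslope, hp.has_fpower_series_dslope_fslope⟩
  · have hev : (fun t : ℝ => t⁻¹ • (hkAux κ₁ κ₂ t)) =ᶠ[nhds r] hkPhi κ₁ κ₂ := by
      filter_upwards [isOpen_compl_singleton.mem_nhds (by simpa using hr : r ∈ ({0}ᶜ : Set ℝ))]
        with t ht
      rw [hkPhi, dslope_of_ne _ (by simpa using ht), slope_def_module]
      simp [div_eq_inv_mul, hkAux_zero, smul_eq_mul]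
    refine AnalyticAt.congr ?_ hev
    exact (analyticAt_id.inv hr).smul (hkAux_analytic κ₁ κ₂ r)

lemma hkPhi_eq (κ₁ κ₂ : ℝ) {r : ℝ} (hr : r ≠ 0) :
    hkPhi κ₁ κ₂ r =
      (Complex.exp (-(Complex.I) * κ₁ * r) - Complex.exp (-(Complex.I) * κ₂ * r)) /
        (4 * (Real.pi : ℂ) * r) := by
  rw [hkPhi, dslope_of_ne _ hr, slope_def_module, hkAux_zero, sub_zero, hkAux, sub_zero]
  rw [Complex.real_smul]
  have : (r:ℂ) ≠ 0 := Complex.ofReal_ne_zero.2 hr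
  field_simp
  rw [one_div, Complex.ofReal_inv, inv_mul_cancel₀ this]
  ring

section NormDeriv
variable {E : Type*} [NormedAddCommGroup E] [InnerProductSpace ℝ E]

lemma norm_fderiv_smul {c : ℝ} (hc : 0 < c) {y : E} (hy : y ≠ 0) :
    fderiv ℝ (fun z : E => ‖z‖) (c • y) = fderiv ℝ (fun z : E => ‖z‖) y := by
  have hcy : c • y ≠ 0 := smul_ne_zero hc.ne' hy
  have hdiff : DifferentiableAt ℝ (fun z : E => ‖z‖) (c • y) :=
    (contDiffAt_norm ℝ (n := 1) hcy).differentiableAt (by norm_num)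
  have hdiffy : DifferentiableAt ℝ (fun z : E => ‖z‖) y :=
    (contDiffAt_norm ℝ (n := 1) hy).differentiableAt (by norm_num)
  have hsm : DifferentiableAt ℝ (fun z : E => c • z) y := differentiableAt_id.const_smul c
  have h1 : (fun z : E => c • ‖z‖) = (fun z : E => ‖z‖) ∘ (fun z : E => c • z) := by
    funext z
    simp [norm_smul, abs_of_pos hc, comp]
  have h2 := fderiv_comp y hdiff hsm
  rw [← h1] at h2
  have h3 : fderiv ℝ (fun z : E => c • ‖z‖) y = c • fderiv ℝ (fun z : E => ‖z‖) y :=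
    fderiv_const_smul hdiffy c
  have h4 : fderiv ℝ (fun z : E => c • z) y = c • ContinuousLinearMap.id ℝ E := by
    have := fderiv_const_smul (𝕜 := ℝ) (f := fun z : E => z) (x := y) differentiableAt_id c
    simpa [fderiv_id, Pi.smul_def] using this
  rw [h3, h4] at h2
  ext v
  have h5 := congrFun (congrArg DFunLike.coe h2) v
  simp only [ContinuousLinearMap.smul_apply, ContinuousLinearMap.coe_comp', comp_apply,
    ContinuousLinearMap.coe_id', id_eq, map_smul, smul_eq_mul] at h5
  exact (mul_left_cancel₀ hc.ne' h5).symm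

lemma norm_fderiv2_smul {c : ℝ} (hc : 0 < c) {y : E} (hy : y ≠ 0) :
    fderiv ℝ (fderiv ℝ (fun z : E => ‖z‖)) (c • y) =
      c⁻¹ • fderiv ℝ (fderiv ℝ (fun z : E => ‖z‖)) y := by
  have hcy : c • y ≠ 0 := smul_ne_zero hc.ne' hy
  set g := fderiv ℝ (fun z : E => ‖z‖) with hg
  have hdiff : DifferentiableAt ℝ g (c • y) :=
    ((contDiffAt_norm ℝ (n := 2) hcy).fderiv_right (m := 1) (by norm_num)).differentiableAt (by norm_num)
  have hsm : DifferentiableAt ℝ (fun z : E => c • z) y := differentiableAt_id.const_smul c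
  have hev : (fun z : E => g (c • z)) =ᶠ[nhds y] g := by
    filter_upwards [isOpen_compl_singleton.mem_nhds (by simpa using hy : y ∈ ({0}ᶜ : Set E))]
      with z hz
    exact norm_fderiv_smul hc (by simpa using hz)
  have h2 : fderiv ℝ (g ∘ fun z : E => c • z) y = (fderiv ℝ g (c • y)).comp (fderiv ℝ (fun z : E => c • z) y) :=
    fderiv_comp y hdiff hsm
  have h4 : fderiv ℝ (fun z : E => c • z) y = c • ContinuousLinearMap.id ℝ E := by
    have := fderiv_const_smul (𝕜 := ℝ) (f := fun z : E => z) (x := y) differentiableAt_id c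
    simpa [fderiv_id, Pi.smul_def] using this
  have h5 : fderiv ℝ (g ∘ fun z : E => c • z) y = fderiv ℝ g y := hev.fderiv_eq
  rw [h5, h4] at h2
  have h6 : fderiv ℝ g y = c • fderiv ℝ g (c • y) := by
    rw [h2]; ext v; simp
  rw [h6, smul_smul, inv_mul_cancel₀ hc.ne', one_smul]

end NormDeriv

local notation "E3" => EuclideanSpace ℝ (Fin 3)

theorem helmholtz_kernel_difference_second_derivative_weakly_singular
    (κ₁ κ₂ : ℝ) (D : EuclideanSpace ℝ (Fin 3) → ℂ)
    (hD : ∀ x : EuclideanSpace ℝ (Fin 3), x ≠ 0 →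
      D x = (Complex.exp (-(Complex.I) * (κ₁ : ℂ) * (‖x‖ : ℂ)) -
             Complex.exp (-(Complex.I) * (κ₂ : ℂ) * (‖x‖ : ℂ))) /
            (4 * (Real.pi : ℂ) * (‖x‖ : ℂ))) :
    (∀ x : EuclideanSpace ℝ (Fin 3), x ≠ 0 → DifferentiableAt ℝ D x) ∧
    (∀ x : EuclideanSpace ℝ (Fin 3), x ≠ 0 → DifferentiableAt ℝ (fderiv ℝ D) x) ∧
    ∃ C : ℝ, 0 < C ∧ ∀ x : EuclideanSpace ℝ (Fin 3), 0 < ‖x‖ → ‖x‖ ≤ 1 →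
      ‖fderiv ℝ (fderiv ℝ D) x‖ ≤ C / ‖x‖ := by
  set φ : ℝ → ℂ := hkPhi κ₁ κ₂ with hφdef
  have hφcd : ContDiff ℝ 2 φ :=
    contDiff_iff_contDiffAt.2 fun r => (hkPhi_analytic κ₁ κ₂ r).contDiffAt
  set Efun : E3 → ℂ := φ ∘ (fun z : E3 => ‖z‖) with hEdef
  have hs : IsOpen ({0}ᶜ : Set E3) := isOpen_compl_singleton
  have hDE : ∀ y : E3, y ≠ 0 → D y = Efun y := by
    intro y hy
    rw [hD y hy, hEdef]
    simp only [comp]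
    rw [hφdef, hkPhi_eq κ₁ κ₂ (norm_ne_zero_iff.2 hy)]
  have heq : ∀ x : E3, x ≠ 0 → D =ᶠ[nhds x] Efun := fun x hx =>
    eventually_of_mem (hs.mem_nhds (by simpa using hx)) fun y hy => hDE y (by simpa using hy)
  have hEcd : ∀ x : E3, x ≠ 0 → ContDiffAt ℝ 2 Efun x := fun x hx =>
    hφcd.contDiffAt.comp x (contDiffAt_norm ℝ hx)
  have hfDE : ∀ x : E3, x ≠ 0 → fderiv ℝ D x = fderiv ℝ Efun x := fun x hx =>
    (heq x hx).fderiv_eq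
  have heq' : ∀ x : E3, x ≠ 0 → fderiv ℝ D =ᶠ[nhds x] fderiv ℝ Efun := fun x hx =>
    eventually_of_mem (hs.mem_nhds (by simpa using hx)) fun y hy => hfDE y (by simpa using hy)
  refine ⟨?_, ?_, ?_⟩
  · intro x hx
    exact (heq x hx).differentiableAt_iff.2 ((hEcd x hx).differentiableAt (by norm_num))
  · intro x hx
    refine (heq' x hx).differentiableAt_iff.2 ?_
    exact ((hEcd x hx).fderiv_right (m := 1) (by norm_num)).differentiableAt (by norm_num)
  -- the quantitative bound
  · -- bound on derivatives of φ on [0,1]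
    have hcont : Continuous (fun r : ℝ => ‖iteratedFDeriv ℝ 0 φ r‖ + ‖iteratedFDeriv ℝ 1 φ r‖
        + ‖iteratedFDeriv ℝ 2 φ r‖) := by
      refine Continuous.add (Continuous.add ?_ ?_) ?_ <;>
        exact (ContDiff.continuous_iteratedFDeriv (by norm_num) hφcd).norm
    obtain ⟨r₀, -, hr₀⟩ := isCompact_Icc.exists_isMaxOn
      (Set.nonempty_Icc.2 (by norm_num) : (Icc (0:ℝ) 1).Nonempty) hcont.continuousOn
    set Cφ : ℝ := max (‖iteratedFDeriv ℝ 0 φ r₀‖ + ‖iteratedFDeriv ℝ 1 φ r₀‖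
        + ‖iteratedFDeriv ℝ 2 φ r₀‖) 1 with hCφdef
    have hCφ1 : (1:ℝ) ≤ Cφ := le_max_right _ _
    have hCφ : ∀ r ∈ Icc (0:ℝ) 1, ∀ i, i ≤ 2 → ‖iteratedFDeriv ℝ i φ r‖ ≤ Cφ := by
      intro r hr i hi
      have hsum : ‖iteratedFDeriv ℝ 0 φ r‖ + ‖iteratedFDeriv ℝ 1 φ r‖
          + ‖iteratedFDeriv ℝ 2 φ r‖ ≤ ‖iteratedFDeriv ℝ 0 φ r₀‖ + ‖iteratedFDeriv ℝ 1 φ r₀‖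
          + ‖iteratedFDeriv ℝ 2 φ r₀‖ := hr₀ hr
      have h0 := norm_nonneg (iteratedFDeriv ℝ 0 φ r)
      have h1 := norm_nonneg (iteratedFDeriv ℝ 1 φ r)
      have h2 := norm_nonneg (iteratedFDeriv ℝ 2 φ r)
      have hCle := le_max_left (‖iteratedFDeriv ℝ 0 φ r₀‖ + ‖iteratedFDeriv ℝ 1 φ r₀‖
        + ‖iteratedFDeriv ℝ 2 φ r₀‖) (1:ℝ)
      interval_cases i <;> linarith
    -- bound on the second derivative of the norm via homogeneity
    set g := fderiv ℝ (fun z : E3 => ‖z‖) with hgdef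
    have hgc : ∀ z : E3, z ≠ 0 → ContinuousAt (fderiv ℝ g) z := by
      intro z hz
      have h3 : ContDiffAt ℝ 3 (fun z : E3 => ‖z‖) z := contDiffAt_norm ℝ hz
      have h2 : ContDiffAt ℝ 2 g z := h3.fderiv_right (m := 2) (by norm_num)
      exact (h2.fderiv_right (m := 1) (by norm_num)).continuousAt
    have hunit : ∃ u : E3, ‖u‖ = 1 := by
      refine ⟨EuclideanSpace.single 0 1, ?_⟩
      simp [EuclideanSpace.norm_single]
    obtain ⟨u₁, hu₁⟩ := hunit
    have hsph : IsCompact (Metric.sphere (0:E3) 1) := isCompact_sphere _ _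
    have hsphne : (Metric.sphere (0:E3) 1).Nonempty := ⟨u₁, by simp [hu₁]⟩
    have hconts : ContinuousOn (fun z : E3 => ‖fderiv ℝ g z‖) (Metric.sphere (0:E3) 1) := by
      intro z hz
      have hz0 : z ≠ 0 := by
        intro h
        rw [Metric.mem_sphere, h] at hz
        simp at hz
      exact ((((contDiffAt_norm ℝ (n := 3) hz0).fderiv_right (m := 2) (by norm_num)).fderiv_right
        (m := 1) (by norm_num)).continuousAt.norm).continuousWithinAt
    obtain ⟨z₀, -, hz₀⟩ := hsph.exists_isMaxOn hsphne hconts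
    set M : ℝ := max ‖fderiv ℝ g z₀‖ 1 with hMdef
    have hM1 : (1:ℝ) ≤ M := le_max_right _ _
    have hgbound : ∀ x : E3, x ≠ 0 → ‖fderiv ℝ g x‖ ≤ M / ‖x‖ := by
      intro x hx
      have hnx : 0 < ‖x‖ := norm_pos_iff.2 hx
      set u : E3 := ‖x‖⁻¹ • x with hudef
      have hu : ‖u‖ = 1 := by
        rw [hudef, norm_smul, Real.norm_eq_abs, abs_of_pos (inv_pos.2 hnx),
          inv_mul_cancel₀ hnx.ne']
      have hu0 : u ≠ 0 := by
        intro h; rw [h] at hu; simp at hu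
      have hxu : x = ‖x‖ • u := by
        rw [hudef, smul_smul, mul_inv_cancel₀ hnx.ne', one_smul]
      have key2 : fderiv ℝ g x = ‖x‖⁻¹ • fderiv ℝ g u := by
        conv_lhs => rw [hxu]
        exact norm_fderiv2_smul hnx hu0
      have step1 : ‖fderiv ℝ g x‖ ≤ ‖x‖⁻¹ * ‖fderiv ℝ g u‖ := by
        rw [key2]
        refine le_trans (ContinuousLinearMap.opNorm_smul_le _ _) (le_of_eq ?_)
        simp [abs_of_pos (inv_pos.2 hnx)]
      refine le_trans step1 ?_
      calc ‖x‖⁻¹ * ‖fderiv ℝ g u‖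
          ≤ ‖x‖⁻¹ * M := by
            have hle : ‖fderiv ℝ g u‖ ≤ ‖fderiv ℝ g z₀‖ :=
              hz₀ (by simp [Metric.mem_sphere, hu] : u ∈ Metric.sphere (0:E3) 1)
            have hM : ‖fderiv ℝ g u‖ ≤ M := le_trans hle (le_max_left _ _)
            exact mul_le_mul_of_nonneg_left hM (inv_nonneg.2 hnx.le)
        _ = M / ‖x‖ := (div_eq_inv_mul _ _).symm
    refine ⟨2 * Cφ * M, by nlinarith, ?_⟩
    intro x hx0 hx1
    have hx : x ≠ 0 := norm_pos_iff.1 hx0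
    have hxmem : x ∈ ({0}ᶜ : Set E3) := by simpa using hx
    have hrw : fderiv ℝ (fderiv ℝ D) x = fderiv ℝ (fderiv ℝ Efun) x :=
      Filter.EventuallyEq.fderiv_eq (heq' x hx)
    rw [hrw]
    have hnorm2 : ‖fderiv ℝ (fderiv ℝ Efun) x‖ = ‖iteratedFDerivWithin ℝ 2 Efun ({0}ᶜ) x‖ := by
      rw [iteratedFDerivWithin_of_isOpen 2 hs hxmem,
        ← norm_iteratedFDeriv_fderiv (n := 1), ← norm_iteratedFDeriv_fderiv (n := 0),
        norm_iteratedFDeriv_zero]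
    rw [hnorm2]
    set Dq : ℝ := Real.sqrt (M / ‖x‖) with hDqdef
    have hMx : (1:ℝ) ≤ M / ‖x‖ := (one_le_div hx0).2 (hx1.trans hM1)
    have hDq2 : Dq ^ 2 = M / ‖x‖ := Real.sq_sqrt (by positivity)
    have hDq1 : 1 ≤ Dq := Real.one_le_sqrt.2 hMx
    have hC : ∀ i, i ≤ 2 → ‖iteratedFDerivWithin ℝ i φ univ ‖x‖‖ ≤ Cφ := by
      intro i hi
      rw [iteratedFDerivWithin_univ]
      exact hCφ ‖x‖ ⟨norm_nonneg x, hx1⟩ i hi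
    have hDbnd : ∀ i, 1 ≤ i → i ≤ 2 →
        ‖iteratedFDerivWithin ℝ i (fun z : E3 => ‖z‖) ({0}ᶜ) x‖ ≤ Dq ^ i := by
      intro i h1i hi2
      interval_cases i
      · rw [iteratedFDerivWithin_of_isOpen 1 hs hxmem]
        have he : ‖iteratedFDeriv ℝ 1 (fun z : E3 => ‖z‖) x‖ = ‖g x‖ := by
          rw [hgdef, ← norm_iteratedFDeriv_fderiv (n := 0), norm_iteratedFDeriv_zero]
        rw [he, pow_one]
        refine le_trans ?_ hDq1
        have := norm_fderiv_le_of_lipschitz ℝ (lipschitzWith_one_norm (E := E3)) (x₀ := x)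
        simpa [hgdef] using this
      · rw [iteratedFDerivWithin_of_isOpen 2 hs hxmem]
        have he : ‖iteratedFDeriv ℝ 2 (fun z : E3 => ‖z‖) x‖ = ‖fderiv ℝ g x‖ := by
          rw [hgdef, ← norm_iteratedFDeriv_fderiv (n := 1),
            ← norm_iteratedFDeriv_fderiv (n := 0), norm_iteratedFDeriv_zero]
        rw [he, hDq2]
        exact hgbound x hx
    have key := norm_iteratedFDerivWithin_comp_le (𝕜 := ℝ) (g := φ)
      (f := fun z : E3 => ‖z‖) (n := 2) (N := 2) (s := ({0}ᶜ : Set E3)) (t := univ)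
      (hφcd.contDiffOn) (fun z hz => (contDiffAt_norm ℝ (n := 2) (by simpa using hz)).contDiffWithinAt)
      le_rfl uniqueDiffOn_univ hs.uniqueDiffOn (mapsTo_univ _ _) hxmem hC hDbnd
    refine le_trans key ?_
    rw [hDq2]
    have h2f : (Nat.factorial 2 : ℝ) = 2 := by norm_num [Nat.factorial]
    rw [h2f]
    have : 2 * Cφ * (M / ‖x‖) = 2 * Cφ * M / ‖x‖ := by ring
    rw [this]
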